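/- The qubit amplitude-damping channel T_γ with 0 < γ < 1 admits no nonzero Markov–Dobrushin lower bound: if B is positive semidefinite and B ≤ T_γ(P) for every rank-one projection P, then B = 0. Hence α_MD(T_γ) = 0 even though κ_tr(T_γ) = √(1−γ) < 1. -/

import Mathlib

open Matrix
open scoped ComplexOrder

namespace TD

variable {d : ℕ}

/-- The old `Matrix.PosSemidef.sqrt` (removed from Mathlib), with its old definition. -/
noncomputable def psdSqrt {A : Matrix (Fin d) (Fin d) ℂ} (hA : A.PosSemidef) :
    Matrix (Fin d) (Fin d) ℂ :=
  hA.1.eigenvectorUnitary.1 * diagonal ((↑) ∘ Real.sqrt ∘ hA.1.eigenvalues) *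
    (star hA.1.eigenvectorUnitary : Matrix (Fin d) (Fin d) ℂ)

noncomputable def trNorm (A : Matrix (Fin d) (Fin d) ℂ) : ℝ :=
  ((psdSqrt (Matrix.posSemidef_conjTranspose_mul_self A)).trace).re

noncomputable def hsNorm (A : Matrix (Fin d) (Fin d) ℂ) : ℝ :=
  Real.sqrt ((Aᴴ * A).trace.re)

def Density (ρ : Matrix (Fin d) (Fin d) ℂ) : Prop :=
  ρ.PosSemidef ∧ ρ.trace = 1

def PosMap (T : Matrix (Fin d) (Fin d) ℂ →ₗ[ℂ] Matrix (Fin d) (Fin d) ℂ) : Prop :=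
  ∀ A, A.PosSemidef → (T A).PosSemidef

def TrPres (T : Matrix (Fin d) (Fin d) ℂ →ₗ[ℂ] Matrix (Fin d) (Fin d) ℂ) : Prop :=
  ∀ A, (T A).trace = A.trace

noncomputable def kappaTr (T : Matrix (Fin d) (Fin d) ℂ →ₗ[ℂ] Matrix (Fin d) (Fin d) ℂ) : ℝ :=
  ⨆ X : {X : Matrix (Fin d) (Fin d) ℂ // X.IsHermitian ∧ X.trace = 0 ∧ X ≠ 0},
    trNorm (T X.1) / trNorm X.1

noncomputable def opNorm1 (L : Matrix (Fin d) (Fin d) ℂ →ₗ[ℂ] Matrix (Fin d) (Fin d) ℂ) : ℝ :=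
  ⨆ X : {X : Matrix (Fin d) (Fin d) ℂ // X ≠ 0}, trNorm (L X.1) / trNorm X.1

noncomputable def s0 (T : Matrix (Fin d) (Fin d) ℂ →ₗ[ℂ] Matrix (Fin d) (Fin d) ℂ) : ℝ :=
  ⨆ X : {X : Matrix (Fin d) (Fin d) ℂ // X.trace = 0 ∧ X ≠ 0},
    hsNorm (T X.1) / hsNorm X.1

noncomputable def choi (T : Matrix (Fin d) (Fin d) ℂ →ₗ[ℂ] Matrix (Fin d) (Fin d) ℂ) :
    Matrix (Fin d × Fin d) (Fin d × Fin d) ℂ :=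
  Matrix.of fun p q => T (Matrix.single p.1 q.1 1) p.2 q.2

def CP (T : Matrix (Fin d) (Fin d) ℂ →ₗ[ℂ] Matrix (Fin d) (Fin d) ℂ) : Prop :=
  (choi T).PosSemidef

noncomputable def replaceChan (τ : Matrix (Fin d) (Fin d) ℂ) :
    Matrix (Fin d) (Fin d) ℂ →ₗ[ℂ] Matrix (Fin d) (Fin d) ℂ where
  toFun X := X.trace • τ
  map_add' X Y := by simp [Matrix.trace_add, add_smul]
  map_smul' c X := by simp [Matrix.trace_smul, smul_smul]

noncomputable def prodComp {n : ℕ} (T : Fin n → (Matrix (Fin d) (Fin d) ℂ →ₗ[ℂ] Matrix (Fin d) (Fin d) ℂ)) :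
    Matrix (Fin d) (Fin d) ℂ →ₗ[ℂ] Matrix (Fin d) (Fin d) ℂ :=
  (List.ofFn T).foldl (fun acc f => f ∘ₗ acc) LinearMap.id

noncomputable def lpow (T : Matrix (Fin d) (Fin d) ℂ →ₗ[ℂ] Matrix (Fin d) (Fin d) ℂ) :
    ℕ → (Matrix (Fin d) (Fin d) ℂ →ₗ[ℂ] Matrix (Fin d) (Fin d) ℂ)
  | 0 => LinearMap.id
  | n + 1 => T ∘ₗ lpow T n

noncomputable def conjPair (K0 K1 : Matrix (Fin 2) (Fin 2) ℂ) :
    Matrix (Fin 2) (Fin 2) ℂ →ₗ[ℂ] Matrix (Fin 2) (Fin 2) ℂ where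
  toFun X := K0 * X * K0ᴴ + K1 * X * K1ᴴ
  map_add' X Y := by
    simp only [Matrix.mul_add, Matrix.add_mul]
    abel
  map_smul' c X := by
    simp [Matrix.mul_smul, Matrix.smul_mul, smul_add]

end TD


namespace TD

lemma herm_form (M : Matrix (Fin 2) (Fin 2) ℂ) (hH : M.IsHermitian) (ht : M.trace = 0) :
    M = !![(((M 0 0).re : ℝ) : ℂ), M 0 1; star (M 0 1), -(((M 0 0).re : ℝ) : ℂ)] := by
  have h00 : M 0 0 = (((M 0 0).re : ℝ) : ℂ) := (hH.coe_re_apply_self 0).symm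
  have h11 : M 1 1 = -(((M 0 0).re : ℝ) : ℂ) := by
    have h2 := trace_fin_two M
    rw [ht] at h2
    rw [← h00]; linear_combination -h2
  have h10 : M 1 0 = star (M 0 1) := (hH.apply 1 0).symm
  ext i j
  fin_cases i <;> fin_cases j <;>
    simp only [Fin.zero_eta, Fin.mk_one, Matrix.cons_val', Matrix.cons_val_zero,
      Matrix.cons_val_one, Matrix.head_cons, Matrix.head_fin_const, Matrix.empty_val',
      Matrix.cons_val_fin_one, Matrix.of_apply]
  · exact h00
  · exact h10
  · exact h11

lemma trNorm_form (a : ℝ) (b : ℂ) :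
    trNorm !![(a : ℂ), b; star b, -(a : ℂ)] = 2 * Real.sqrt (a ^ 2 + Complex.normSq b) := by
  have hc0 : (0:ℝ) ≤ a ^ 2 + Complex.normSq b := add_nonneg (sq_nonneg a) (Complex.normSq_nonneg b)
  set M : Matrix (Fin 2) (Fin 2) ℂ := !![(a : ℂ), b; star b, -(a : ℂ)] with hM
  have hsq : Mᴴ * M = (((a ^ 2 + Complex.normSq b : ℝ)) : ℂ) • 1 := by
    have hMH : Mᴴ = M := by
      ext i j
      fin_cases i <;> fin_cases j <;>
        simp [hM, Matrix.conjTranspose_apply]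
    rw [hMH, hM]
    rw [Matrix.mul_fin_two]
    ext i j
    fin_cases i <;> fin_cases j <;>
      · simp only [Matrix.smul_apply, Matrix.one_apply, Matrix.cons_val', Matrix.cons_val_zero,
          Matrix.cons_val_one, Matrix.head_cons, Matrix.head_fin_const, Matrix.empty_val',
          Matrix.cons_val_fin_one, Matrix.of_apply, Fin.zero_eta, Fin.mk_one]
        push_cast [Complex.normSq_eq_conj_mul_self]
        simp [Matrix.one_apply]
        ring_nf
        try simp [Complex.ext_iff]
        try ring
  have hone : ((Real.sqrt (a ^ 2 + Complex.normSq b) : ℂ) • (1 : Matrix (Fin 2) (Fin 2) ℂ)).PosSemidef := by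
    rw [Matrix.smul_one_eq_diagonal]
    refine Matrix.PosSemidef.diagonal fun i => ?_
    simp only [Pi.le_def, Pi.zero_apply]
    exact Complex.zero_le_real.2 (Real.sqrt_nonneg _)
  have hroot : ((Real.sqrt (a ^ 2 + Complex.normSq b) : ℂ) • (1 : Matrix (Fin 2) (Fin 2) ℂ)) ^ 2 = Mᴴ * M := by
    rw [hsq, smul_pow, one_pow, ← Complex.ofReal_pow, Real.sq_sqrt hc0]
  have heq : ((Real.sqrt (a ^ 2 + Complex.normSq b) : ℂ) • (1 : Matrix (Fin 2) (Fin 2) ℂ)) =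
      psdSqrt (Matrix.posSemidef_conjTranspose_mul_self M) := by
    have h1 : psdSqrt (Matrix.posSemidef_conjTranspose_mul_self M) = cfc Real.sqrt (Mᴴ * M) := by
      rw [(Matrix.posSemidef_conjTranspose_mul_self M).1.cfc_eq, IsHermitian.cfc,
        Unitary.conjStarAlgAut_apply]; rfl
    have hc : (((a ^ 2 + Complex.normSq b : ℝ)) : ℂ) • (1 : Matrix (Fin 2) (Fin 2) ℂ)
        = algebraMap ℝ _ (a ^ 2 + Complex.normSq b) := by
      rw [Algebra.algebraMap_eq_smul_one, Complex.coe_smul]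
    rw [h1, hsq, hc, cfc_algebraMap, Algebra.algebraMap_eq_smul_one, Complex.coe_smul]
  rw [trNorm, ← heq]
  simp [Matrix.trace_smul, Matrix.trace_one]
  ring

lemma conjPair_apply (K0 K1 X : Matrix (Fin 2) (Fin 2) ℂ) :
    conjPair K0 K1 X = K0 * X * K0ᴴ + K1 * X * K1ᴴ := rfl

lemma chan_entries (γ : ℝ) (hγ0 : 0 ≤ γ) (hγ1 : γ ≤ 1) (X : Matrix (Fin 2) (Fin 2) ℂ) :
    conjPair !![(1:ℂ),0;0,(Real.sqrt (1-γ) : ℂ)] !![(0:ℂ),(Real.sqrt γ : ℂ);0,0] X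
      = !![X 0 0 + (γ:ℂ) * X 1 1, (Real.sqrt (1-γ) : ℂ) * X 0 1;
           (Real.sqrt (1-γ) : ℂ) * X 1 0, ((1-γ : ℝ) : ℂ) * X 1 1] := by
  rw [conjPair_apply]
  have hs : ((Real.sqrt (1-γ) : ℂ)) * ((Real.sqrt (1-γ) : ℂ)) = ((1-γ : ℝ) : ℂ) := by
    rw [← Complex.ofReal_mul, Real.mul_self_sqrt (by linarith)]
  have hg : ((Real.sqrt γ : ℂ)) * ((Real.sqrt γ : ℂ)) = (γ : ℂ) := by
    rw [← Complex.ofReal_mul, Real.mul_self_sqrt hγ0]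
  ext i j
  fin_cases i <;> fin_cases j <;>
    · simp only [Matrix.add_apply, Matrix.mul_apply, Fin.sum_univ_two,
        Matrix.conjTranspose_apply, Matrix.cons_val', Matrix.cons_val_zero, Matrix.cons_val_one,
        Matrix.head_cons, Matrix.head_fin_const, Matrix.empty_val', Matrix.cons_val_fin_one,
        Matrix.of_apply, Fin.zero_eta, Fin.mk_one, star_zero, star_one, Complex.star_def,
        Complex.conj_ofReal]
      simp only [map_zero, _root_.map_one, mul_zero, zero_mul, mul_one, one_mul, add_zero, zero_add]
      try ring_nf
      try rw [show ((Real.sqrt γ : ℂ)) ^ 2 = (γ : ℂ) by rw [pow_two]; exact hg]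
      try rw [show ((Real.sqrt (1-γ) : ℂ)) ^ 2 = ((1-γ:ℝ) : ℂ) by rw [pow_two]; exact hs]
      try push_cast
      try ring

lemma psd_re_nonneg {M : Matrix (Fin 2) (Fin 2) ℂ} (hM : M.PosSemidef) (x : Fin 2 → ℂ) :
    0 ≤ (star x ⬝ᵥ (M *ᵥ x)).re :=
  (Complex.le_def.mp (hM.dotProduct_mulVec_nonneg x)).1

lemma psd_diag11 {M : Matrix (Fin 2) (Fin 2) ℂ} (hM : M.PosSemidef) : 0 ≤ (M 1 1).re := by
  have h := psd_re_nonneg hM ![0, 1]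
  have e : star ![(0:ℂ), 1] ⬝ᵥ (M *ᵥ ![0, 1]) = M 1 1 := by
    simp [dotProduct, Matrix.mulVec, Fin.sum_univ_two]
  rwa [e] at h

lemma psd_offdiag_zero {B : Matrix (Fin 2) (Fin 2) ℂ} (hB : B.PosSemidef) (h11 : B 1 1 = 0) :
    B 0 1 = 0 := by
  by_contra hne
  have hn : 0 < Complex.normSq (B 0 1) := Complex.normSq_pos.mpr hne
  obtain ⟨t, ht⟩ : ∃ t : ℝ, t = -((B 0 0).re + 1) / (2 * Complex.normSq (B 0 1)) := ⟨_, rfl⟩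
  have h10 : B 1 0 = star (B 0 1) := (hB.1.apply 1 0).symm
  have h := psd_re_nonneg hB ![1, (t : ℂ) * star (B 0 1)]
  have e : star ![(1:ℂ), (t : ℂ) * star (B 0 1)] ⬝ᵥ (B *ᵥ ![1, (t : ℂ) * star (B 0 1)])
      = B 0 0 + 2 * t * Complex.normSq (B 0 1) := by
    simp only [dotProduct, Matrix.mulVec, Fin.sum_univ_two, Matrix.cons_val_zero,
      Matrix.cons_val_one, Matrix.head_cons, Pi.star_apply, star_one, star_mul', star_star,
      Complex.star_def, Complex.conj_ofReal, h11, h10, _root_.map_one, one_mul, _root_.map_mul,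
      Complex.conj_conj, mul_zero, zero_mul, add_zero, mul_one]
    push_cast [Complex.normSq_eq_conj_mul_self]
    ring
  rw [e] at h
  have hre : (B 0 0 + 2 * t * Complex.normSq (B 0 1) : ℂ).re
      = (B 0 0).re + 2 * t * Complex.normSq (B 0 1) := by
    simp [Complex.add_re, Complex.mul_re, Complex.ofReal_re, Complex.ofReal_im]
  rw [hre] at h
  have hmul : 2 * t * Complex.normSq (B 0 1) = -((B 0 0).re + 1) := by
    rw [ht]; field_simp
  rw [hmul] at h
  linarith

lemma part1 (γ : ℝ) (hγ : 0 < γ ∧ γ < 1)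
    (B : Matrix (Fin 2) (Fin 2) ℂ) (hB : B.PosSemidef)
    (hall : ∀ P : Matrix (Fin 2) (Fin 2) ℂ, P.IsHermitian → P * P = P → P.trace = 1 →
      ((conjPair !![(1:ℂ),0;0,(Real.sqrt (1-γ) : ℂ)]
          !![(0:ℂ),(Real.sqrt γ : ℂ);0,0]) P - B).PosSemidef) :
    B = 0 := by
  obtain ⟨hγ0, hγ1⟩ := hγ
  -- Step 1: use P = |0⟩⟨0|
  have hP1 : (!![(1:ℂ),0;0,0] : Matrix (Fin 2) (Fin 2) ℂ).IsHermitian := by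
    ext i j; fin_cases i <;> fin_cases j <;> simp [Matrix.conjTranspose_apply]
  have hP1sq : (!![(1:ℂ),0;0,0] : Matrix (Fin 2) (Fin 2) ℂ) * !![(1:ℂ),0;0,0] = !![(1:ℂ),0;0,0] := by
    ext i j; fin_cases i <;> fin_cases j <;> simp [Matrix.mul_apply, Fin.sum_univ_two]
  have hP1tr : (!![(1:ℂ),0;0,0] : Matrix (Fin 2) (Fin 2) ℂ).trace = 1 := by
    simp [Matrix.trace_fin_two]
  have h1 := hall _ hP1 hP1sq hP1tr
  rw [chan_entries γ hγ0.le hγ1.le] at h1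
  have hTP1 : (!![(!![(1:ℂ),0;0,0] : Matrix (Fin 2) (Fin 2) ℂ) 0 0 + (γ:ℂ) * !![(1:ℂ),0;0,0] 1 1,
      (Real.sqrt (1-γ) : ℂ) * !![(1:ℂ),0;0,0] 0 1;
      (Real.sqrt (1-γ) : ℂ) * !![(1:ℂ),0;0,0] 1 0,
      ((1-γ:ℝ):ℂ) * !![(1:ℂ),0;0,0] 1 1] : Matrix (Fin 2) (Fin 2) ℂ) = !![(1:ℂ),0;0,0] := by
    ext i j; fin_cases i <;> fin_cases j <;> simp
  rw [hTP1] at h1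
  -- B 1 1 = 0
  have hb11re : (B 1 1).re = 0 := by
    have hd := psd_diag11 h1
    have hd' := psd_diag11 hB
    simp only [Matrix.sub_apply] at hd
    have : ((!![(1:ℂ),0;0,0] : Matrix (Fin 2) (Fin 2) ℂ) 1 1) = 0 := by simp
    rw [this] at hd
    simp [Complex.sub_re] at hd
    linarith
  have hb11 : B 1 1 = 0 := by
    have him := congrArg Complex.im (hB.1.apply 1 1)
    simp only [Complex.star_def, Complex.conj_im] at him
    apply Complex.ext <;> simp [hb11re] <;> linarith
  have hb01 : B 0 1 = 0 := psd_offdiag_zero hB hb11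
  have hb10 : B 1 0 = 0 := by
    have h := hB.1.apply 0 1
    rw [hb01] at h
    exact star_eq_zero.mp h
  have hb00 : B 0 0 = (((B 0 0).re : ℝ) : ℂ) := (hB.1.coe_re_apply_self 0).symm
  obtain ⟨b, hbdef⟩ : ∃ b : ℝ, b = (B 0 0).re := ⟨_, rfl⟩
  have hbnn : 0 ≤ b := by
    rw [hbdef]
    have h := psd_re_nonneg hB ![1, 0]
    have e : star ![(1:ℂ), 0] ⬝ᵥ (B *ᵥ ![1, 0]) = B 0 0 := by
      simp [dotProduct, Matrix.mulVec, Fin.sum_univ_two]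
    rwa [e] at h
  have hBform : B = !![(b:ℂ), 0; 0, 0] := by
    ext i j; fin_cases i <;> fin_cases j <;>
      simp [hb01, hb10, hb11, hbdef, ← hb00]
  -- Step 2: family of projections
  have hble : ∀ β : ℝ, 0 < β → β ≤ 1 → b ≤ γ * β ^ 2 := by
    intro β hβ0 hβ1
    obtain ⟨α, hαdef⟩ : ∃ α : ℝ, α = Real.sqrt (1 - β ^ 2) := ⟨_, rfl⟩
    have hα2 : α ^ 2 = 1 - β ^ 2 := by
      rw [hαdef, Real.sq_sqrt]; nlinarith
    set P : Matrix (Fin 2) (Fin 2) ℂ :=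
      !![((α^2 : ℝ) : ℂ), ((α*β : ℝ) : ℂ); ((α*β : ℝ) : ℂ), ((β^2 : ℝ) : ℂ)] with hPdef
    have hPh : P.IsHermitian := by
      ext i j; fin_cases i <;> fin_cases j <;>
        simp [hPdef, Matrix.conjTranspose_apply, Complex.conj_ofReal]
    have hPsq : P * P = P := by
      ext i j; fin_cases i <;> fin_cases j <;>
        · simp only [hPdef, Matrix.mul_apply, Fin.sum_univ_two, Matrix.cons_val', Matrix.cons_val_zero,
            Matrix.cons_val_one, Matrix.head_cons, Matrix.head_fin_const, Matrix.empty_val',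
            Matrix.cons_val_fin_one, Matrix.of_apply, Fin.zero_eta, Fin.mk_one]
          push_cast
          norm_cast
          first
          | linear_combination α ^ 2 * hα2
          | linear_combination α * β * hα2
          | linear_combination β ^ 2 * hα2
    have hPtr : P.trace = 1 := by
      simp only [hPdef, Matrix.trace_fin_two, Matrix.cons_val', Matrix.cons_val_zero,
        Matrix.cons_val_one, Matrix.head_cons, Matrix.head_fin_const, Matrix.empty_val',
        Matrix.cons_val_fin_one, Matrix.of_apply]
      push_cast
      have : α^2 + β^2 = 1 := by nlinarith [hα2]
      exact_mod_cast congrArg (Complex.ofReal) this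
    have h2 := hall P hPh hPsq hPtr
    rw [chan_entries γ hγ0.le hγ1.le] at h2
    have hquad := psd_re_nonneg h2 ![((Real.sqrt (1-γ) * β : ℝ) : ℂ), ((-α : ℝ) : ℂ)]
    have hs2 : (Real.sqrt (1-γ)) ^ 2 = 1 - γ := Real.sq_sqrt (by linarith)
    have key : (star ![((Real.sqrt (1-γ) * β : ℝ) : ℂ), ((-α : ℝ) : ℂ)] ⬝ᵥ
        ((!![P 0 0 + (γ:ℂ) * P 1 1, (Real.sqrt (1-γ) : ℂ) * P 0 1;
           (Real.sqrt (1-γ) : ℂ) * P 1 0, ((1-γ : ℝ) : ℂ) * P 1 1] - B) *ᵥ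
          ![((Real.sqrt (1-γ) * β : ℝ) : ℂ), ((-α : ℝ) : ℂ)]))
        = (((1-γ) * β^2 * (γ * β^2 - b) : ℝ) : ℂ) := by
      simp only [hPdef, hBform, Matrix.sub_apply, dotProduct, Matrix.mulVec, Fin.sum_univ_two,
        Matrix.cons_val', Matrix.cons_val_zero, Matrix.cons_val_one, Matrix.head_cons,
        Matrix.head_fin_const, Matrix.empty_val', Matrix.cons_val_fin_one, Matrix.of_apply,
        Fin.zero_eta, Fin.mk_one, Pi.star_apply, Complex.star_def, Complex.conj_ofReal]
      push_cast
      ring_nf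
      rw [show ((Real.sqrt (1-γ) : ℝ) : ℂ) ^ 2 = ((1-γ : ℝ) : ℂ) by
        rw [← Complex.ofReal_pow, hs2]]
      push_cast
      ring
    rw [key] at hquad
    rw [Complex.ofReal_re] at hquad
    have hfac : 0 < (1-γ) * β^2 := mul_pos (by linarith) (by positivity)
    nlinarith [hquad]
  -- b = 0
  have hb0 : b = 0 := by
    by_contra hbne
    have hbpos : 0 < b := lt_of_le_of_ne hbnn (Ne.symm hbne)
    obtain ⟨β, hβdef⟩ : ∃ β : ℝ, β = min 1 (Real.sqrt (b / (2*γ))) := ⟨_, rfl⟩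
    have hβpos : 0 < β := by
      rw [hβdef]
      exact lt_min one_pos (Real.sqrt_pos.mpr (div_pos hbpos (by linarith)))
    have hβ1 : β ≤ 1 := by rw [hβdef]; exact min_le_left _ _
    have hineq := hble β hβpos hβ1
    have hβ2 : β ^ 2 ≤ b / (2*γ) := by
      have h1 : β ≤ Real.sqrt (b / (2*γ)) := by rw [hβdef]; exact min_le_right _ _
      calc β ^ 2 ≤ (Real.sqrt (b / (2*γ))) ^ 2 := by nlinarith [hβpos.le]
        _ = b / (2*γ) := Real.sq_sqrt (div_pos hbpos (by linarith)).le
    have : γ * β ^ 2 ≤ b / 2 := by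
      calc γ * β ^ 2 ≤ γ * (b / (2*γ)) := by nlinarith
        _ = b / 2 := by field_simp
    linarith
  rw [hBform, hb0]
  ext i j; fin_cases i <;> fin_cases j <;> simp

lemma part2 (γ : ℝ) (hγ : 0 < γ ∧ γ < 1) :
    kappaTr (conjPair !![(1:ℂ),0;0,(Real.sqrt (1-γ) : ℂ)]
        !![(0:ℂ),(Real.sqrt γ : ℂ);0,0]) = Real.sqrt (1-γ) := by
  obtain ⟨hγ0, hγ1⟩ := hγ
  have h1γ : (0:ℝ) < 1 - γ := by linarith
  set s : ℝ := Real.sqrt (1-γ) with hsdef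
  have hs0 : 0 < s := Real.sqrt_pos.mpr h1γ
  set T := conjPair !![(1:ℂ),0;0,(s : ℂ)] !![(0:ℂ),(Real.sqrt γ : ℂ);0,0] with hT
  -- the witness
  have hXw : (!![(0:ℂ),1;1,0] : Matrix (Fin 2) (Fin 2) ℂ).IsHermitian ∧
      (!![(0:ℂ),1;1,0] : Matrix (Fin 2) (Fin 2) ℂ).trace = 0 ∧
      (!![(0:ℂ),1;1,0] : Matrix (Fin 2) (Fin 2) ℂ) ≠ 0 := by
    refine ⟨?_, ?_, ?_⟩
    · ext i j; fin_cases i <;> fin_cases j <;> simp [Matrix.conjTranspose_apply]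
    · simp [Matrix.trace_fin_two]
    · intro h
      have := congrFun (congrFun h 0) 1
      simp at this
  -- ratio bound
  have hbound : ∀ X : {X : Matrix (Fin 2) (Fin 2) ℂ // X.IsHermitian ∧ X.trace = 0 ∧ X ≠ 0},
      trNorm (T X.1) / trNorm X.1 ≤ s := by
    rintro ⟨X, hH, htr, hne⟩
    obtain ⟨a, ha⟩ : ∃ a : ℝ, a = (X 0 0).re := ⟨_, rfl⟩
    obtain ⟨b, hb⟩ : ∃ b : ℂ, b = X 0 1 := ⟨_, rfl⟩
    have hform : X = !![(a:ℂ), b; star b, -(a:ℂ)] := by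
      rw [ha, hb]; exact herm_form X hH htr
    have hTX : T X = !![(((1-γ)*a : ℝ):ℂ), (s:ℂ)*b; star ((s:ℂ)*b), -(((1-γ)*a : ℝ):ℂ)] := by
      rw [hT, chan_entries γ hγ0.le hγ1.le X]
      rw [hform]
      ext i j
      fin_cases i <;> fin_cases j <;>
        · simp only [Matrix.cons_val', Matrix.cons_val_zero, Matrix.cons_val_one,
            Matrix.head_cons, Matrix.head_fin_const, Matrix.empty_val', Matrix.cons_val_fin_one,
            Matrix.of_apply, Fin.zero_eta, Fin.mk_one, star_mul', Complex.star_def,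
            Complex.conj_ofReal]
          try push_cast
          try ring
    have hnX : trNorm X = 2 * Real.sqrt (a^2 + Complex.normSq b) := by
      rw [hform]
      have := trNorm_form a b
      convert this using 3 <;> simp [Complex.normSq_ofReal]
    have hnTX : trNorm (T X) = 2 * Real.sqrt (((1-γ)*a)^2 + (1-γ) * Complex.normSq b) := by
      rw [hTX]
      have := trNorm_form ((1-γ)*a) ((s:ℂ)*b)
      have hnsq : Complex.normSq ((s:ℂ)*b) = (1-γ) * Complex.normSq b := by
        rw [Complex.normSq_mul, Complex.normSq_ofReal,
          show s * s = 1 - γ from by rw [hsdef]; exact Real.mul_self_sqrt h1γ.le]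
      rw [← hnsq]
      convert this using 3 <;> simp [Complex.normSq_ofReal]
    have hpos : 0 < a^2 + Complex.normSq b := by
      rcases (lt_or_eq_of_le (add_nonneg (sq_nonneg a) (Complex.normSq_nonneg b))) with h | h
      · exact h
      · exfalso
        apply hne
        have ha0 : a = 0 := by nlinarith [sq_nonneg a, Complex.normSq_nonneg b]
        have hb0 : b = 0 := by
          have : Complex.normSq b = 0 := by nlinarith [sq_nonneg a, Complex.normSq_nonneg b]
          exact Complex.normSq_eq_zero.mp this
        rw [hform, ha0, hb0]
        ext i j; fin_cases i <;> fin_cases j <;> simp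
    have hXpos : 0 < trNorm X := by
      rw [hnX]; positivity
    rw [div_le_iff₀ hXpos, hnTX, hnX]
    have hle : Real.sqrt (((1-γ)*a)^2 + (1-γ) * Complex.normSq b)
        ≤ s * Real.sqrt (a^2 + Complex.normSq b) := by
      rw [hsdef, ← Real.sqrt_mul h1γ.le]
      apply Real.sqrt_le_sqrt
      have : ((1-γ)*a)^2 = (1-γ)^2 * a^2 := by ring
      rw [this]
      nlinarith [sq_nonneg a, Complex.normSq_nonneg b]
    nlinarith [Real.sqrt_nonneg (a^2 + Complex.normSq b), Real.sqrt_nonneg (((1-γ)*a)^2 + (1-γ) * Complex.normSq b)]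
  have hne : Nonempty {X : Matrix (Fin 2) (Fin 2) ℂ // X.IsHermitian ∧ X.trace = 0 ∧ X ≠ 0} :=
    ⟨⟨_, hXw⟩⟩
  have hbdd : BddAbove (Set.range fun X : {X : Matrix (Fin 2) (Fin 2) ℂ // X.IsHermitian ∧ X.trace = 0 ∧ X ≠ 0} =>
      trNorm (T X.1) / trNorm X.1) := by
    refine ⟨s, ?_⟩
    rintro y ⟨X, rfl⟩
    exact hbound X
  apply le_antisymm
  · exact ciSup_le hbound
  · -- witness ratio equals s
    have hval : trNorm (T (!![(0:ℂ),1;1,0])) / trNorm (!![(0:ℂ),1;1,0] : Matrix (Fin 2) (Fin 2) ℂ) = s := by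
      have h1 : trNorm (!![(0:ℂ),1;1,0] : Matrix (Fin 2) (Fin 2) ℂ) = 2 := by
        have := trNorm_form 0 1
        simp only [Complex.ofReal_zero, neg_zero, star_one] at this
        rw [this]
        norm_num
      have h2 : trNorm (T (!![(0:ℂ),1;1,0])) = 2 * s := by
        have hTX : T (!![(0:ℂ),1;1,0]) = !![(((0:ℝ)):ℂ), ((s:ℝ):ℂ); star (((s:ℝ)):ℂ), -(((0:ℝ)):ℂ)] := by
          rw [hT, chan_entries γ hγ0.le hγ1.le]
          ext i j
          fin_cases i <;> fin_cases j <;>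
            simp [Complex.star_def, Complex.conj_ofReal, hsdef]
        rw [hTX, trNorm_form 0 ((s:ℝ):ℂ), Complex.normSq_ofReal]
        rw [show (0:ℝ)^2 + s*s = s^2 by ring, Real.sqrt_sq hs0.le]
      rw [h1, h2]
      field_simp
    calc s = trNorm (T (!![(0:ℂ),1;1,0])) / trNorm (!![(0:ℂ),1;1,0] : Matrix (Fin 2) (Fin 2) ℂ) := hval.symm
      _ ≤ _ := le_ciSup hbdd ⟨_, hXw⟩

end TD


theorem stmt15 (γ : ℝ) (hγ : 0 < γ ∧ γ < 1) :
    (∀ B : Matrix (Fin 2) (Fin 2) ℂ, B.PosSemidef →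
      (∀ P : Matrix (Fin 2) (Fin 2) ℂ, P.IsHermitian → P * P = P → P.trace = 1 →
        ((TD.conjPair !![(1:ℂ),0;0,(Real.sqrt (1-γ) : ℂ)]
            !![(0:ℂ),(Real.sqrt γ : ℂ);0,0]) P - B).PosSemidef) →
      B = 0) ∧
    TD.kappaTr (TD.conjPair !![(1:ℂ),0;0,(Real.sqrt (1-γ) : ℂ)]
        !![(0:ℂ),(Real.sqrt γ : ℂ);0,0]) = Real.sqrt (1-γ) ∧
    Real.sqrt (1-γ) < 1 := by
  refine ⟨fun B hB hall => TD.part1 γ hγ B hB hall, TD.part2 γ hγ, ?_⟩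
  have h := Real.sqrt_lt_sqrt (by linarith [hγ.2] : (0:ℝ) ≤ 1 - γ) (by linarith [hγ.1] : 1 - γ < 1)
  simpa using h
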